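/- For all l, r ∈ H', all σ ∈ ℝ^n_+ and all i ∈ {1,…,n}, the partial derivative of the Galerkin-approximated measurement satisfies ∂F_{l,r}(σ)/∂σ_i = −(λ^l)ᵀ B_i λ^r, where B_i ∈ ℝ^{N×N} is the matrix with (j,k)-th entry b_i(Λ_j, Λ_k). -/

import Mathlib

open scoped BigOperators
open Matrix

set_option maxHeartbeats 2000000 in
/-- For all `l, r ∈ H'`, all `σ ∈ ℝ^n_+` and all `i ∈ {1,…,n}`,
the partial derivative of the Galerkin-approximated measurement satisfies
`∂F_{l,r}(σ)/∂σ_i = −(λ^l)ᵀ B_i λ^r`, where `B_i ∈ ℝ^{N×N}` is the matrix with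
`(j,k)`-th entry `b_i(Λ_j, Λ_k)`. -/
theorem stmt_19
    {H : Type*} [NormedAddCommGroup H] [InnerProductSpace ℝ H] [CompleteSpace H]
    {n N : ℕ}
    (b0 : H →L[ℝ] H →L[ℝ] ℝ) (b : Fin n → H →L[ℝ] H →L[ℝ] ℝ)
    (hb0symm : ∀ u v : H, b0 u v = b0 v u)
    (hb0pos : ∀ v : H, 0 ≤ b0 v v)
    (hbsymm : ∀ i, ∀ u v : H, b i u v = b i v u)
    (hbpos : ∀ i, ∀ v : H, 0 ≤ b i v v)
    (C β : ℝ) (hβ : 0 < β) (hCβ : β ≤ C)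
    (hcoer : ∀ v : H, β * ‖v‖ ^ 2 ≤ b0 v v + ∑ i, b i v v)
    (hbound : ∀ v : H, b0 v v + ∑ i, b i v v ≤ C * ‖v‖ ^ 2)
    (Λ : Fin N → H) (hΛ : LinearIndependent ℝ Λ)
    -- the Galerkin solution operator on V = span Λ
    (ut : (Fin n → ℝ) → (H →L[ℝ] ℝ) → H)
    (hmem : ∀ σ l, ut σ l ∈ Submodule.span ℝ (Set.range Λ))
    (hut : ∀ σ : Fin n → ℝ, (∀ i, 0 < σ i) → ∀ l : H →L[ℝ] ℝ,
      ∀ v ∈ Submodule.span ℝ (Set.range Λ),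
        b0 (ut σ l) v + ∑ i, σ i * b i (ut σ l) v = l v) :
    ∀ l r : H →L[ℝ] ℝ, ∀ σ : Fin n → ℝ, (∀ i, 0 < σ i) → ∀ i : Fin n,
      -- coefficient vectors of ũ_σ^l and ũ_σ^r in the basis Λ
      ∀ lamL lamR : Fin N → ℝ,
        ut σ l = ∑ j, lamL j • Λ j → ut σ r = ∑ j, lamR j • Λ j →
      ∃ DFt : (Fin n → ℝ) →L[ℝ] ℝ,
        HasFDerivAt (fun σ' => r (ut σ' l)) DFt σ ∧
        DFt (Pi.single i 1) =
          -(lamL ⬝ᵥ ((Matrix.of fun j k : Fin N => b i (Λ j) (Λ k)) *ᵥ lamR)) := by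
  intro l r σ hσ i lamL lamR hL hR
  classical
  set u : H := ut σ l with hu
  set w : H := ut σ r with hw
  set M : ℝ := ∑ j, ‖b j‖ with hMdef
  have hM0 : 0 ≤ M := Finset.sum_nonneg fun j _ => (b j).opNorm_nonneg
  have hne : (Finset.univ : Finset (Fin n)).Nonempty := ⟨i, Finset.mem_univ i⟩
  set s : ℝ := Finset.univ.inf' hne σ with hsdef
  have hs : 0 < s := (Finset.lt_inf'_iff hne).2 fun j _ => hσ j
  have hsle : ∀ j, s ≤ σ j := fun j => Finset.inf'_le _ (Finset.mem_univ j)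
  set m : ℝ := min 1 (s / 2) with hmdef
  have hm : 0 < m := lt_min one_pos (by linarith)
  -- symmetry of the full form
  have bsym : ∀ (τ : Fin n → ℝ) (x y : H),
      b0 x y + ∑ j, τ j * b j x y = b0 y x + ∑ j, τ j * b j y x := by
    intro τ x y
    rw [hb0symm]
    exact congrArg _ (Finset.sum_congr rfl fun j _ => by rw [hbsymm])
  -- coercivity for parameters ≥ s/2
  have hco : ∀ (σ' : Fin n → ℝ), (∀ j, s / 2 ≤ σ' j) → ∀ v : H,
      m * β * ‖v‖ ^ 2 ≤ b0 v v + ∑ j, σ' j * b j v v := by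
    intro σ' hσ' v
    have h1 : m * (β * ‖v‖ ^ 2) ≤ m * (b0 v v + ∑ j, b j v v) :=
      mul_le_mul_of_nonneg_left (hcoer v) hm.le
    have h2 : m * (b0 v v + ∑ j, b j v v) ≤ b0 v v + ∑ j, σ' j * b j v v := by
      rw [mul_add, Finset.mul_sum]
      apply add_le_add
      · have hm1 : m ≤ 1 := min_le_left _ _
        nlinarith [hb0pos v]
      · apply Finset.sum_le_sum
        intro j _
        have hmj : m ≤ σ' j := le_trans (min_le_right _ _) (hσ' j)
        nlinarith [hbpos j v]
    nlinarith
  -- the key value identity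
  have hval : ∀ (σ' : Fin n → ℝ), (∀ j, 0 < σ' j) →
      r (ut σ' l) - r u = ∑ j, (σ j - σ' j) * b j w (ut σ' l) := by
    intro σ' hσ'
    have h1 : b0 w (ut σ' l) + ∑ j, σ j * b j w (ut σ' l) = r (ut σ' l) :=
      hut σ hσ r _ (hmem σ' l)
    have h2 : b0 w u + ∑ j, σ j * b j w u = r u := hut σ hσ r u (hmem σ l)
    have h3 : b0 w u + ∑ j, σ j * b j w u = l w := (bsym σ w u).trans (hut σ hσ l w (hmem σ r))
    have h4 : b0 w (ut σ' l) + ∑ j, σ' j * b j w (ut σ' l) = l w :=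
      (bsym σ' w _).trans (hut σ' hσ' l w (hmem σ r))
    have hsum : ∑ j, (σ j - σ' j) * b j w (ut σ' l)
        = (∑ j, σ j * b j w (ut σ' l)) - ∑ j, σ' j * b j w (ut σ' l) := by
      rw [← Finset.sum_sub_distrib]
      exact Finset.sum_congr rfl fun j _ => by ring
    linear_combination -h1 + h2 - h3 + h4 - hsum
  -- stability estimate
  have hstab : ∀ (σ' : Fin n → ℝ), (∀ j, 0 < σ' j) → (∀ j, s / 2 ≤ σ' j) →
      ‖ut σ' l - u‖ ≤ (M * ‖u‖ / (m * β)) * ‖σ' - σ‖ := by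
    intro σ' hσ'pos hσ'ge
    set d : H := ut σ' l - u with hd
    have hdV : d ∈ Submodule.span ℝ (Set.range Λ) :=
      Submodule.sub_mem _ (hmem σ' l) (hmem σ l)
    have e1 : b0 (ut σ' l) d + ∑ j, σ' j * b j (ut σ' l) d = l d := hut σ' hσ'pos l d hdV
    have e2 : b0 u d + ∑ j, σ j * b j u d = l d := hut σ hσ l d hdV
    have e3 : b0 d d = b0 (ut σ' l) d - b0 u d := by
      rw [hd, map_sub]; simp only [ContinuousLinearMap.sub_apply, map_sub]; ring
    have e4 : ∀ j, b j d d = b j (ut σ' l) d - b j u d := by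
      intro j; rw [hd, map_sub]; simp only [ContinuousLinearMap.sub_apply, map_sub]; ring
    have hEq : b0 d d + ∑ j, σ' j * b j d d = ∑ j, (σ j - σ' j) * b j u d := by
      have hsum1 : ∑ j, σ' j * b j d d
          = (∑ j, σ' j * b j (ut σ' l) d) - ∑ j, σ' j * b j u d := by
        rw [← Finset.sum_sub_distrib]
        exact Finset.sum_congr rfl fun j _ => by rw [e4 j]; ring
      have hsum2 : ∑ j, (σ j - σ' j) * b j u d
          = (∑ j, σ j * b j u d) - ∑ j, σ' j * b j u d := by
        rw [← Finset.sum_sub_distrib]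
        exact Finset.sum_congr rfl fun j _ => by ring
      linear_combination e3 + hsum1 + e1 - e2 - hsum2
    have hub : b0 d d + ∑ j, σ' j * b j d d ≤ ‖σ' - σ‖ * (M * ‖u‖ * ‖d‖) := by
      rw [hEq]
      calc ∑ j, (σ j - σ' j) * b j u d
          ≤ ∑ j, ‖σ' - σ‖ * (‖b j‖ * ‖u‖ * ‖d‖) := by
            apply Finset.sum_le_sum
            intro j _
            have h1 : |σ j - σ' j| ≤ ‖σ' - σ‖ := by
              have := norm_le_pi_norm (σ' - σ) j
              simpa [Real.norm_eq_abs, abs_sub_comm] using this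
            have h2 : |b j u d| ≤ ‖b j‖ * ‖u‖ * ‖d‖ := by
              have := (b j).le_opNorm₂ u d
              simpa [Real.norm_eq_abs] using this
            calc (σ j - σ' j) * b j u d ≤ |(σ j - σ' j) * b j u d| := le_abs_self _
              _ = |σ j - σ' j| * |b j u d| := abs_mul _ _
              _ ≤ ‖σ' - σ‖ * (‖b j‖ * ‖u‖ * ‖d‖) :=
                  mul_le_mul h1 h2 (abs_nonneg _) (norm_nonneg _)
        _ = ‖σ' - σ‖ * (M * ‖u‖ * ‖d‖) := by
            rw [hMdef, Finset.sum_mul, Finset.sum_mul, Finset.mul_sum]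
    have hlb : m * β * ‖d‖ ^ 2 ≤ b0 d d + ∑ j, σ' j * b j d d := hco σ' hσ'ge d
    rcases eq_or_lt_of_le (norm_nonneg d) with h0 | h0
    · rw [hd] at h0
      rw [← h0]
      exact mul_nonneg (div_nonneg (mul_nonneg hM0 (norm_nonneg _)) (mul_pos hm hβ).le)
        (norm_nonneg _)
    · have key : m * β * ‖d‖ ≤ M * ‖u‖ * ‖σ' - σ‖ := by nlinarith
      rw [hd] at key h0 ⊢
      rw [div_mul_eq_mul_div, le_div_iff₀ (mul_pos hm hβ)]
      nlinarith [key]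
  -- the derivative candidate
  refine ⟨-(∑ j, (b j w u) • (ContinuousLinearMap.proj j : ((Fin n → ℝ) →L[ℝ] ℝ))), ?_, ?_⟩
  · -- differentiability
    have hballpos : (0 : ℝ) < s / 2 := by linarith
    have hball : ∀ σ' ∈ Metric.ball σ (s / 2), (∀ j, 0 < σ' j) ∧ (∀ j, s / 2 ≤ σ' j) := by
      intro σ' hσ'
      have hn : ‖σ' - σ‖ < s / 2 := by
        rw [Metric.mem_ball, dist_eq_norm] at hσ'; exact hσ'
      have hcomp : ∀ j, s / 2 ≤ σ' j := by
        intro j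
        have h1 : |σ' j - σ j| ≤ ‖σ' - σ‖ := by
          have := norm_le_pi_norm (σ' - σ) j
          simpa [Real.norm_eq_abs] using this
        have := hsle j
        have := abs_le.1 h1
        linarith [this.1]
      exact ⟨fun j => lt_of_lt_of_le (by linarith) (hcomp j), hcomp⟩
    have hbig : (fun σ' => r (ut σ' l) - r u
          - (-(∑ j, (b j w u) • (ContinuousLinearMap.proj j : ((Fin n → ℝ) →L[ℝ] ℝ)))) (σ' - σ))
        =O[nhds σ] fun σ' => ‖σ' - σ‖ ^ 2 := by
      apply Asymptotics.IsBigO.of_bound (M * ‖w‖ * (M * ‖u‖ / (m * β)))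
      filter_upwards [Metric.ball_mem_nhds σ hballpos] with σ' hσ'
      obtain ⟨hp, hg⟩ := hball σ' hσ'
      have happ : (-(∑ j, (b j w u) • (ContinuousLinearMap.proj j : ((Fin n → ℝ) →L[ℝ] ℝ)))) (σ' - σ)
          = ∑ j, (σ j - σ' j) * b j w u := by
        rw [ContinuousLinearMap.neg_apply, ContinuousLinearMap.sum_apply, ← Finset.sum_neg_distrib]
        exact Finset.sum_congr rfl fun j _ => by
          simp [ContinuousLinearMap.smul_apply, ContinuousLinearMap.proj_apply]; ring
      rw [happ, hval σ' hp, ← Finset.sum_sub_distrib]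
      have hstep : ∀ j, (σ j - σ' j) * b j w (ut σ' l) - (σ j - σ' j) * b j w u
          = (σ j - σ' j) * b j w (ut σ' l - u) := by
        intro j
        rw [map_sub]
        simp [mul_sub]
      simp only [hstep]
      have hd' : ‖ut σ' l - u‖ ≤ (M * ‖u‖ / (m * β)) * ‖σ' - σ‖ := hstab σ' hp hg
      calc ‖∑ j, (σ j - σ' j) * b j w (ut σ' l - u)‖
          ≤ ∑ j, ‖(σ j - σ' j) * b j w (ut σ' l - u)‖ := norm_sum_le _ _
        _ ≤ ∑ j, ‖σ' - σ‖ * (‖b j‖ * ‖w‖ * ((M * ‖u‖ / (m * β)) * ‖σ' - σ‖)) := by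
            apply Finset.sum_le_sum
            intro j _
            have h1 : |σ j - σ' j| ≤ ‖σ' - σ‖ := by
              have := norm_le_pi_norm (σ' - σ) j
              simpa [Real.norm_eq_abs, abs_sub_comm] using this
            have h2 : |b j w (ut σ' l - u)| ≤ ‖b j‖ * ‖w‖ * ((M * ‖u‖ / (m * β)) * ‖σ' - σ‖) := by
              have hop := (b j).le_opNorm₂ w (ut σ' l - u)
              rw [Real.norm_eq_abs] at hop
              refine hop.trans ?_
              have : ‖b j‖ * ‖w‖ * ‖ut σ' l - u‖ ≤ ‖b j‖ * ‖w‖ * ((M * ‖u‖ / (m * β)) * ‖σ' - σ‖) := by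
                apply mul_le_mul_of_nonneg_left hd' (by positivity)
              exact this
            rw [Real.norm_eq_abs, abs_mul]
            exact mul_le_mul h1 h2 (abs_nonneg _) (norm_nonneg _)
        _ = (∑ j, ‖b j‖) * (‖w‖ * ((M * ‖u‖ / (m * β)) * (‖σ' - σ‖ * ‖σ' - σ‖))) := by
            rw [Finset.sum_mul, Finset.sum_mul]
            apply Finset.sum_congr rfl
            intro j _
            ring
        _ = M * ‖w‖ * (M * ‖u‖ / (m * β)) * ‖‖σ' - σ‖ ^ 2‖ := by
            rw [← hMdef, Real.norm_eq_abs, abs_of_nonneg (sq_nonneg _)]; ring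
    have hlit : (fun σ' : Fin n → ℝ => ‖σ' - σ‖ ^ 2) =o[nhds σ] fun σ' => σ' - σ := by
      rw [Asymptotics.isLittleO_iff]
      intro c hc
      filter_upwards [Metric.ball_mem_nhds σ hc] with σ' hσ'
      have hlt : ‖σ' - σ‖ < c := by rw [Metric.mem_ball, dist_eq_norm] at hσ'; exact hσ'
      have h0 : (0:ℝ) ≤ ‖σ' - σ‖ := norm_nonneg _
      rw [Real.norm_eq_abs, abs_of_nonneg (by positivity)]
      nlinarith
    exact hasFDerivAt_iff_isLittleO.2 (hbig.trans_isLittleO hlit)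
  · -- value of the derivative
    have happ : (-(∑ j, (b j w u) • (ContinuousLinearMap.proj j : ((Fin n → ℝ) →L[ℝ] ℝ))))
        (Pi.single i 1) = -(b i w u) := by
      rw [ContinuousLinearMap.neg_apply, ContinuousLinearMap.sum_apply]
      congr 1
      rw [Finset.sum_eq_single i]
      · simp
      · intro j _ hj
        simp [ContinuousLinearMap.smul_apply, ContinuousLinearMap.proj_apply,
          Pi.single_apply, hj]
      · intro h; exact absurd (Finset.mem_univ i) h
    rw [happ]
    congr 1
    rw [hL, hR]
    simp only [map_sum, _root_.map_smul, ContinuousLinearMap.coe_sum', ContinuousLinearMap.coe_smul',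
      Finset.sum_apply, Pi.smul_apply, smul_eq_mul, dotProduct, Matrix.mulVec, Matrix.of_apply,
      Finset.mul_sum]
    apply Finset.sum_congr rfl
    intro j _
    apply Finset.sum_congr rfl
    intro k _
    rw [hbsymm i (Λ k) (Λ j)]
    ring
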